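/- arXiv:2101.09896 — 2 statements merged into one kernel-verified Lean document; each statement's English description precedes it below -/
import Mathlib

section
/- For every integer b ≥ 1, every y ∈ ℤ and every α ≥ 0, the b-bit phase-quantizer transition probabilities evaluated at phase θ = π/2^b satisfy the reflection symmetry W_{(2^{b−1}−y) mod 2^b}^{(b)}(α, π/2^b) = W_{(2^{b−1}+y) mod 2^b}^{(b)}(α, π/2^b). -/
open MeasureTheory Real

noncomputable section

/-- Argument of a complex number taking values in `[0, 2π)`. -/
def arg2pi (z : ℂ) : ℝ := if 0 ≤ Complex.arg z then Complex.arg z else Complex.arg z + 2 * π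

/-- The quantization sector `R_y` of a `b`-bit phase quantizer. -/
def sector (b y : ℕ) : Set ℂ :=
  {z : ℂ | z ≠ 0 ∧ 2 * π * y / 2 ^ b ≤ arg2pi z ∧ arg2pi z < 2 * π * (y + 1) / 2 ^ b}

/-- Transition probability `W_y^{(b)}(α, θ)` of the `b`-bit phase-quantized Gaussian channel. -/
def W (b y : ℕ) (α θ : ℝ) : ℝ :=
  ∫ z in sector b y,
    (1 / π) *
      Real.exp (-(‖z - (Real.sqrt α : ℂ) * Complex.exp ((θ : ℂ) * Complex.I)‖ ^ 2))

/-- Transition probability with integer output index, understood modulo `2^b`. -/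
def Wz (b : ℕ) (y : ℤ) (α θ : ℝ) : ℝ := W b ((y % (2 ^ b : ℤ)).toNat) α θ

/-- `x ↦ -x log₂ x`, with the convention `0 log₂ 0 = 0`. -/
def nH (x : ℝ) : ℝ := -(x * Real.logb 2 x)

/-- Conditional output entropy `H(Y | U = √α e^{iθ})`. -/
def hEnt (b : ℕ) (α θ : ℝ) : ℝ := ∑ y ∈ Finset.range (2 ^ b), nH (W b y α θ)

/-- `W_y^{(b)}(u)` for a complex channel input `u`. -/
def Wu (b y : ℕ) (u : ℂ) : ℝ := W b y (‖u‖ ^ 2) (arg2pi u)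

/-- Output probability `p_y` under input distribution `μ`. -/
def outP (b : ℕ) (μ : Measure ℂ) (y : ℕ) : ℝ := ∫ u, Wu b y u ∂μ

/-- Mutual information of the `b`-bit phase-quantized Gaussian channel with input law `μ`. -/
def mutInfo (b : ℕ) (μ : Measure ℂ) : ℝ :=
  (∑ y ∈ Finset.range (2 ^ b), nH (outP b μ y)) -
    ∫ u, ∑ y ∈ Finset.range (2 ^ b), nH (Wu b y u) ∂μ

/-- Rotation of the complex plane by the angle `2π/2^b`. -/
def rot (b : ℕ) : ℂ → ℂ := fun u => Complex.exp (((2 * π / 2 ^ b : ℝ) : ℂ) * Complex.I) * u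

/-- A measure on `ℂ` is `2π/2^b`-symmetric if it is invariant under rotation by `2π/2^b`. -/
def RotSymm (b : ℕ) (μ : Measure ℂ) : Prop := Measure.map (rot b) μ = μ




lemma arg2pi_nonneg (z : ℂ) : 0 ≤ arg2pi z := by
  unfold arg2pi; split
  · assumption
  · nlinarith [Complex.neg_pi_lt_arg z, Real.pi_pos]

lemma arg2pi_lt (z : ℂ) : arg2pi z < 2 * π := by
  unfold arg2pi; split
  · nlinarith [Complex.arg_le_pi z, Real.pi_pos]
  · nlinarith [Complex.arg_le_pi z, (by linarith : Complex.arg z < 0)]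

lemma exp_arg2pi (z : ℂ) : (‖z‖ : ℂ) * Complex.exp ((arg2pi z : ℂ) * Complex.I) = z := by
  unfold arg2pi; split
  · exact Complex.norm_mul_exp_arg_mul_I z
  · push_cast
    rw [add_mul, Complex.exp_add]
    have : Complex.exp ((2 * π : ℝ) * Complex.I) = 1 := by
      push_cast; rw [Complex.exp_two_pi_mul_I]
    push_cast at this
    rw [this, mul_one]
    exact Complex.norm_mul_exp_arg_mul_I z

lemma arg2pi_mul_exp {r t : ℝ} (hr : 0 < r) (h0 : 0 ≤ t) (h2 : t < 2 * π) :
    arg2pi ((r : ℂ) * Complex.exp ((t : ℂ) * Complex.I)) = t := by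
  rcases le_or_gt t π with h | h
  · have harg : Complex.arg ((r : ℂ) * Complex.exp ((t : ℂ) * Complex.I)) = t := by
      rw [Complex.arg_real_mul _ hr, Complex.exp_mul_I,
        Complex.arg_cos_add_sin_mul_I ⟨by linarith [Real.pi_pos], h⟩]
    unfold arg2pi; rw [harg]; simp [h0]
  · have hper : Complex.exp ((t : ℂ) * Complex.I) = Complex.exp (((t - 2 * π : ℝ) : ℂ) * Complex.I) := by
      push_cast
      rw [sub_mul, Complex.exp_sub]
      have : Complex.exp ((2 : ℂ) * (π : ℂ) * Complex.I) = 1 := Complex.exp_two_pi_mul_I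
      rw [this, div_one]
    have harg : Complex.arg ((r : ℂ) * Complex.exp ((t : ℂ) * Complex.I)) = t - 2 * π := by
      rw [hper, Complex.arg_real_mul _ hr, Complex.exp_mul_I, Complex.arg_cos_add_sin_mul_I ⟨by linarith, by linarith [Real.pi_pos]⟩]
    unfold arg2pi; rw [harg]
    have : ¬ (0 ≤ t - 2 * π) := by linarith
    simp [this]

lemma null_ray (c : ℝ) : volume {z : ℂ | arg2pi z = c} = 0 := by
  have hsub : {z : ℂ | arg2pi z = c} ⊆
      (Submodule.span ℝ {Complex.exp ((c : ℂ) * Complex.I)} : Submodule ℝ ℂ) := by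
    intro z hz
    rw [SetLike.mem_coe, Submodule.mem_span_singleton]
    refine ⟨‖z‖, ?_⟩
    rw [Complex.real_smul, ← hz, exp_arg2pi]
  have hne : (Submodule.span ℝ {Complex.exp ((c : ℂ) * Complex.I)} : Submodule ℝ ℂ) ≠ ⊤ := by
    intro h
    have : Complex.I * Complex.exp ((c : ℂ) * Complex.I) ∈
        (Submodule.span ℝ {Complex.exp ((c : ℂ) * Complex.I)} : Submodule ℝ ℂ) := by
      rw [h]; trivial
    rw [Submodule.mem_span_singleton] at this
    obtain ⟨r, hr⟩ := this
    rw [Complex.real_smul] at hr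
    have hexp : Complex.exp ((c : ℂ) * Complex.I) ≠ 0 := Complex.exp_ne_zero _
    have : (r : ℂ) = Complex.I := mul_right_cancel₀ hexp hr
    have := congrArg Complex.im this
    simp at this
  exact measure_mono_null hsub (Measure.addHaar_submodule volume _ hne)

/-- The grid of "bad" rays. -/
def grid (b : ℕ) : Set ℂ := ⋃ j ∈ Finset.range (2 ^ b + 1), {z : ℂ | arg2pi z = 2 * π * j / 2 ^ b}

lemma null_grid (b : ℕ) : volume (grid b) = 0 := by
  refine (measure_biUnion_null_iff (Finset.range (2 ^ b + 1)).countable_toSet).mpr ?_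
  intro j _
  exact null_ray _

lemma not_grid_iff {b : ℕ} {z : ℂ} : z ∉ grid b ↔ ∀ j : ℕ, j ≤ 2 ^ b → arg2pi z ≠ 2 * π * j / 2 ^ b := by
  simp only [grid, Set.mem_iUnion, Set.mem_setOf_eq, not_exists, Finset.mem_coe,
    Finset.mem_range, Nat.lt_succ_iff]

/-- The reflection `z ↦ e^{2πi/2^b} conj z`. -/
def reflMap (b : ℕ) : ℂ → ℂ :=
  fun z => Complex.exp (((2 * π / 2 ^ b : ℝ) : ℂ) * Complex.I) * (starRingEnd ℂ) z

lemma reflMap_invol (b : ℕ) (z : ℂ) : reflMap b (reflMap b z) = z := by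
  unfold reflMap
  rw [map_mul, ← Complex.exp_conj, map_mul, Complex.conj_ofReal, Complex.conj_I,
    Complex.conj_conj, ← mul_assoc, mul_neg, ← Complex.exp_add]
  simp

lemma reflMap_ne_zero {b : ℕ} {z : ℂ} (hz : z ≠ 0) : reflMap b z ≠ 0 := by
  unfold reflMap
  exact mul_ne_zero (Complex.exp_ne_zero _) (by simpa using hz)

lemma reflMap_eq (b : ℕ) (z : ℂ) :
    reflMap b z = (‖z‖ : ℂ) *
      Complex.exp (((2 * π / 2 ^ b - arg2pi z : ℝ) : ℂ) * Complex.I) := by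
  conv_lhs => rw [reflMap, ← exp_arg2pi z]
  rw [map_mul, Complex.conj_ofReal, ← Complex.exp_conj, map_mul, Complex.conj_ofReal,
    Complex.conj_I, mul_neg, mul_left_comm, ← Complex.exp_add]
  push_cast
  ring_nf

lemma refl_arg2pi {b : ℕ} (hb : 1 ≤ b) {z : ℂ} (h0 : z ≠ 0)
    (hφ : arg2pi z ≠ 2 * π / 2 ^ b) :
    arg2pi (reflMap b z) =
      if arg2pi z < 2 * π / 2 ^ b then 2 * π / 2 ^ b - arg2pi z
      else 2 * π / 2 ^ b - arg2pi z + 2 * π := by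
  have hr : (0 : ℝ) < ‖z‖ := by simpa using h0
  have ha0 := arg2pi_nonneg z
  have ha2 := arg2pi_lt z
  have hpi := Real.pi_pos
  have hN : (2 : ℝ) ≤ 2 ^ b := by
    calc (2 : ℝ) = 2 ^ 1 := by norm_num
    _ ≤ 2 ^ b := by exact pow_le_pow_right₀ (by norm_num) hb
  have hφpos : 0 < 2 * π / 2 ^ b := by positivity
  have hφle : 2 * π / 2 ^ b ≤ π := by
    rw [div_le_iff₀ (by positivity)]
    nlinarith
  rcases lt_or_gt_of_ne hφ with h | h
  · rw [if_pos h, reflMap_eq]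
    exact arg2pi_mul_exp hr (by linarith) (by linarith)
  · rw [if_neg (by linarith), reflMap_eq]
    have hper : Complex.exp (((2 * π / 2 ^ b - arg2pi z : ℝ) : ℂ) * Complex.I)
        = Complex.exp (((2 * π / 2 ^ b - arg2pi z + 2 * π : ℝ) : ℂ) * Complex.I) := by
      push_cast
      rw [add_mul, Complex.exp_add, Complex.exp_two_pi_mul_I, mul_one]
    rw [hper]
    exact arg2pi_mul_exp hr (by linarith) (by linarith)

def invol (b k : ℕ) : ℕ := if k = 0 then 0 else 2 ^ b - k

lemma arg2pi_zero : arg2pi 0 = 0 := by simp [arg2pi]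

lemma refl_not_grid {b : ℕ} (hb : 1 ≤ b) {z : ℂ} (hz : z ∉ grid b) : reflMap b z ∉ grid b := by
  rw [not_grid_iff] at hz ⊢
  have hne : z ≠ 0 := by
    intro h; exact hz 0 (Nat.zero_le _) (by simp [h, arg2pi_zero])
  have ha0 : 0 < arg2pi z := lt_of_le_of_ne (arg2pi_nonneg z)
    (fun h => hz 0 (Nat.zero_le _) (by simpa using h.symm))
  have ha2 := arg2pi_lt z
  have hφ : arg2pi z ≠ 2 * π / 2 ^ b := by
    intro h; exact hz 1 (Nat.one_le_two_pow) (by rw [h]; norm_num)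
  have hNpos : (0 : ℝ) < 2 ^ b := by positivity
  have hpi := Real.pi_pos
  have hφpos : (0:ℝ) < 2 * π / 2 ^ b := by positivity
  rw [refl_arg2pi hb hne hφ]
  intro j hj heq
  have hjb : (j : ℝ) ≤ 2 ^ b := by exact_mod_cast hj
  split at heq
  · rcases Nat.eq_zero_or_pos j with rfl | hj1
    · simp at heq; linarith
    · have hj1' : (1 : ℝ) ≤ (j : ℝ) := by exact_mod_cast hj1
      field_simp at heq
      nlinarith [mul_pos ha0 hNpos]
  · push_neg at *
    rcases Nat.eq_zero_or_pos j with rfl | hj1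
    · simp at heq; linarith
    · set m : ℕ := 2 ^ b + 1 - j with hm
      have hmle : m ≤ 2 ^ b := by omega
      have hmcast : (m : ℝ) = (2 ^ b : ℝ) + 1 - (j : ℝ) := by
        have h1 : (m : ℝ) = ((2 ^ b + 1 - j : ℕ) : ℝ) := by rw [hm]
        rw [h1, Nat.cast_sub (by omega)]
        push_cast; ring
      refine hz m hmle ?_
      rw [hmcast]
      field_simp at heq ⊢
      nlinarith [heq]

lemma refl_sector {b : ℕ} (hb : 1 ≤ b) {k : ℕ} (hk : k < 2 ^ b) {z : ℂ} (hz : z ∉ grid b)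
    (hs : z ∈ sector b k) : reflMap b z ∈ sector b (invol b k) := by
  obtain ⟨hne, hlo, hhi⟩ := hs
  rw [not_grid_iff] at hz
  have ha0 : 0 < arg2pi z := lt_of_le_of_ne (arg2pi_nonneg z)
    (fun h => hz 0 (Nat.zero_le _) (by simpa using h.symm))
  have ha2 := arg2pi_lt z
  have hφ : arg2pi z ≠ 2 * π / 2 ^ b := by
    intro h; exact hz 1 (Nat.one_le_two_pow) (by rw [h]; norm_num)
  have hlo' : 2 * π * k / 2 ^ b < arg2pi z :=
    lt_of_le_of_ne hlo (fun h => hz k (le_of_lt hk) h.symm)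
  have hNpos : (0 : ℝ) < 2 ^ b := by positivity
  have hpi := Real.pi_pos
  have hφpos : (0:ℝ) < 2 * π / 2 ^ b := by positivity
  have h2pi : 2 * π * (2 ^ b : ℝ) / 2 ^ b = 2 * π := by field_simp
  refine ⟨reflMap_ne_zero hne, ?_⟩
  rw [refl_arg2pi hb hne hφ]
  rcases Nat.eq_zero_or_pos k with rfl | hk1
  · have halt : arg2pi z < 2 * π / 2 ^ b := by
      have : 2 * π * ((0:ℕ) + 1) / 2 ^ b = 2 * π / 2 ^ b := by norm_num
      linarith [hhi, this.symm ▸ hhi]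
    rw [if_pos halt]
    simp only [invol, if_pos rfl]
    constructor
    · push_cast; ring_nf at halt ⊢; linarith
    · push_cast; ring_nf at halt ⊢; linarith
  · have hk1' : (1 : ℝ) ≤ (k : ℝ) := by exact_mod_cast hk1
    have hmono : 2 * π * 1 / 2 ^ b ≤ 2 * π * (k:ℝ) / 2 ^ b := by gcongr
    have hage : ¬ (arg2pi z < 2 * π / 2 ^ b) := by
      push_neg
      ring_nf at hmono hlo' ⊢
      linarith
    rw [if_neg hage]
    have hinv : invol b k = 2 ^ b - k := by simp [invol, hk1.ne']
    rw [hinv]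
    have hcast : ((2 ^ b - k : ℕ) : ℝ) = (2 ^ b : ℝ) - k := by
      rw [Nat.cast_sub hk.le]; push_cast; ring
    constructor
    · rw [hcast]
      have : 2 * π * ((2:ℝ) ^ b - ↑k) / 2 ^ b
          = 2 * π * (2 ^ b : ℝ) / 2 ^ b - 2 * π * (k:ℝ) / 2 ^ b := by ring
      rw [this, h2pi]
      ring_nf at hhi ⊢
      linarith
    · rw [hcast]
      have : 2 * π * ((2:ℝ) ^ b - ↑k + 1) / 2 ^ b
          = 2 * π * (2 ^ b : ℝ) / 2 ^ b - 2 * π * (k:ℝ) / 2 ^ b + 2 * π / 2 ^ b := by ring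
      rw [this, h2pi]
      ring_nf at hlo' ⊢
      linarith

lemma invol_lt {b k : ℕ} (hb : 1 ≤ b) (hk : k < 2 ^ b) : invol b k < 2 ^ b := by
  have h1 : 1 ≤ 2 ^ b := Nat.one_le_two_pow
  unfold invol
  split <;> omega

lemma invol_invol {b k : ℕ} (hk : k < 2 ^ b) : invol b (invol b k) = k := by
  have h1 : 1 ≤ 2 ^ b := Nat.one_le_two_pow
  unfold invol
  split
  · next h => subst h; simp
  · next h =>
    rw [if_neg (by omega)]
    omega

lemma key_mod (b : ℕ) (hb : 1 ≤ b) (y : ℤ) :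
    (((2:ℤ) ^ (b-1) - y) % 2 ^ b).toNat = invol b ((((2:ℤ) ^ (b-1) + y) % 2 ^ b).toNat) := by
  have hpow : (2:ℤ) ^ (b-1) + 2 ^ (b-1) = 2 ^ b := by
    rw [← two_mul, ← pow_succ']
    congr 1
    omega
  have hM : (0:ℤ) < 2 ^ b := by positivity
  obtain ⟨r₁, hr₁⟩ : ∃ r, ((2:ℤ) ^ (b-1) - y) % 2 ^ b = r := ⟨_, rfl⟩
  obtain ⟨r₂, hr₂⟩ : ∃ r, ((2:ℤ) ^ (b-1) + y) % 2 ^ b = r := ⟨_, rfl⟩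
  rw [hr₁, hr₂]
  have h₁ : 0 ≤ r₁ := by rw [← hr₁]; exact Int.emod_nonneg _ (ne_of_gt hM)
  have h₂ : 0 ≤ r₂ := by rw [← hr₂]; exact Int.emod_nonneg _ (ne_of_gt hM)
  have h₁' : r₁ < 2 ^ b := by rw [← hr₁]; exact Int.emod_lt_of_pos _ hM
  have h₂' : r₂ < 2 ^ b := by rw [← hr₂]; exact Int.emod_lt_of_pos _ hM
  have hsum : ((2:ℤ)^b) ∣ (r₁ + r₂) := by
    apply Int.dvd_of_emod_eq_zero
    rw [← hr₁, ← hr₂, ← Int.add_emod]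
    have he : ((2:ℤ) ^ (b-1) - y) + ((2:ℤ) ^ (b-1) + y) = 2 ^ b := by linarith
    rw [he, Int.emod_self]
  obtain ⟨c, hc⟩ := hsum
  have hcases : r₁ + r₂ = 0 ∨ r₁ + r₂ = 2 ^ b := by
    rcases le_or_gt c 0 with h | h
    · left
      have : (2:ℤ) ^ b * c ≤ 0 := mul_nonpos_of_nonneg_of_nonpos hM.le h
      linarith
    · right
      have h1c : (1:ℤ) ≤ c := h
      have hle : (2:ℤ) ^ b * 1 ≤ 2 ^ b * c := mul_le_mul_of_nonneg_left h1c hM.le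
      have hc2 : c < 2 := by
        by_contra hh
        push_neg at hh
        have : (2:ℤ) ^ b * 2 ≤ 2 ^ b * c := mul_le_mul_of_nonneg_left hh hM.le
        linarith
      have : c = 1 := by omega
      subst this
      linarith
  obtain ⟨n, hn⟩ : ∃ n : ℕ, (2:ℕ)^b = n := ⟨_, rfl⟩
  have hnz : ((n:ℤ)) = 2 ^ b := by rw [← hn]; push_cast; ring
  unfold invol
  rw [← hnz] at h₁' h₂' hcases
  rw [hn]
  split <;> omega

def reflLIE (b : ℕ) : ℂ ≃ₗᵢ[ℝ] ℂ :=
  Complex.conjLIE.trans (rotation (Circle.exp (2 * π / 2 ^ b)))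

lemma reflLIE_apply (b : ℕ) (z : ℂ) : reflLIE b z = reflMap b z := by
  simp [reflLIE, reflMap, rotation_apply, Circle.coe_exp]

lemma abs_refl (b : ℕ) (α : ℝ) (z : ℂ) :
    ‖reflMap b z - (Real.sqrt α : ℂ) * Complex.exp (((π / 2 ^ b : ℝ) : ℂ) * Complex.I)‖
      = ‖z - (Real.sqrt α : ℂ) * Complex.exp (((π / 2 ^ b : ℝ) : ℂ) * Complex.I)‖ := by
  set c : ℂ := (Real.sqrt α : ℂ) * Complex.exp (((π / 2 ^ b : ℝ) : ℂ) * Complex.I) with hc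
  have hkey : reflMap b z - c =
      Complex.exp (((2 * π / 2 ^ b : ℝ) : ℂ) * Complex.I) * (starRingEnd ℂ) (z - c) := by
    rw [map_sub, mul_sub]
    unfold reflMap
    congr 1
    rw [hc, map_mul, Complex.conj_ofReal, ← Complex.exp_conj, map_mul, Complex.conj_ofReal,
      Complex.conj_I, mul_neg, ← mul_assoc, mul_comm _ ((Real.sqrt α : ℂ)), mul_assoc,
      ← Complex.exp_add]
    congr 2
    push_cast
    ring
  rw [hkey, norm_mul, Complex.norm_exp_ofReal_mul_I, one_mul, Complex.norm_conj]

lemma toNat_mod_lt (b : ℕ) (x : ℤ) : (x % 2 ^ b).toNat < 2 ^ b := by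
  have hM : (0:ℤ) < 2 ^ b := by positivity
  have h1 := Int.emod_lt_of_pos x hM
  have h2 := Int.emod_nonneg x (ne_of_gt hM)
  obtain ⟨n, hn⟩ : ∃ n : ℕ, (2:ℕ)^b = n := ⟨_, rfl⟩
  have hnz : ((n:ℤ)) = 2 ^ b := by rw [← hn]; push_cast; ring
  rw [← hnz] at h1
  rw [hn]
  omega

lemma W_refl {b : ℕ} (hb : 1 ≤ b) {k : ℕ} (hk : k < 2 ^ b) (α : ℝ) :
    (∫ z in sector b (invol b k),
      (1 / π) * Real.exp (-(‖z - (Real.sqrt α : ℂ) *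
        Complex.exp (((π / 2 ^ b : ℝ) : ℂ) * Complex.I)‖ ^ 2)))
    = ∫ z in sector b k,
      (1 / π) * Real.exp (-(‖z - (Real.sqrt α : ℂ) *
        Complex.exp (((π / 2 ^ b : ℝ) : ℂ) * Complex.I)‖ ^ 2)) := by
  have hmp := (reflLIE b).measurePreserving
  have hemb : MeasurableEmbedding (reflLIE b) := (reflLIE b).toHomeomorph.measurableEmbedding
  have hcoe : ⇑(reflLIE b) = reflMap b := funext (reflLIE_apply b)
  have hae : (reflMap b) ⁻¹' (sector b (invol b k)) =ᵐ[volume] sector b k := by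
    rw [Filter.eventuallyEq_set]
    rw [MeasureTheory.ae_iff]
    refine measure_mono_null ?_ (null_grid b)
    intro z hzz
    simp only [Set.mem_setOf_eq] at hzz
    by_contra hg
    apply hzz
    constructor
    · intro h
      have h1 : reflMap b z ∉ grid b := refl_not_grid hb hg
      have h2 := refl_sector hb (invol_lt hb hk) h1 h
      rwa [invol_invol hk, reflMap_invol] at h2
    · intro h
      exact refl_sector hb hk hg h
  calc ∫ z in sector b (invol b k),
      (1 / π) * Real.exp (-(‖z - (Real.sqrt α : ℂ) *
        Complex.exp (((π / 2 ^ b : ℝ) : ℂ) * Complex.I)‖ ^ 2))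
      = ∫ z in (reflLIE b) ⁻¹' (sector b (invol b k)),
          (1 / π) * Real.exp (-(‖(reflLIE b) z - (Real.sqrt α : ℂ) *
            Complex.exp (((π / 2 ^ b : ℝ) : ℂ) * Complex.I)‖ ^ 2)) :=
        (hmp.setIntegral_preimage_emb hemb _ _).symm
    _ = ∫ z in (reflMap b) ⁻¹' (sector b (invol b k)),
          (1 / π) * Real.exp (-(‖z - (Real.sqrt α : ℂ) *
            Complex.exp (((π / 2 ^ b : ℝ) : ℂ) * Complex.I)‖ ^ 2)) := by
        rw [hcoe]
        simp only [abs_refl]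
    _ = ∫ z in sector b k,
          (1 / π) * Real.exp (-(‖z - (Real.sqrt α : ℂ) *
            Complex.exp (((π / 2 ^ b : ℝ) : ℂ) * Complex.I)‖ ^ 2)) :=
        setIntegral_congr_set hae

/-- reflection symmetry of the transition probabilities at `θ = π/2^b`. -/
theorem stmt_1 (b : ℕ) (hb : 1 ≤ b) (y : ℤ) (α : ℝ) (hα : 0 ≤ α) :
    Wz b ((2 : ℤ) ^ (b - 1) - y) α (π / 2 ^ b) =
      Wz b ((2 : ℤ) ^ (b - 1) + y) α (π / 2 ^ b) := by
  unfold Wz W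
  rw [key_mod b hb y]
  exact W_refl hb (toNat_mod_lt b _) α

end
end

section
/- If a probability measure μ on ℂ is 2π/2^b-symmetric, i.e. invariant under multiplication by e^{i·2π/2^b}, then the output distribution of the b-bit phase-quantized Gaussian channel is uniform: p_y = ∫_ℂ W_y^{(b)}(u) dμ(u) = 2^{−b} for every y ∈ {0,…,2^b−1}; consequently the output entropy H(Y) = Σ_{y=0}^{2^b−1}(−p_y log₂ p_y) equals b, its maximum possible value. -/
open MeasureTheory Real

noncomputable section

/-! ### Auxiliary material -/

/-- The Gaussian density centered at `u`. -/
def g (u z : ℂ) : ℝ := (1 / π) * Real.exp (-(‖z - u‖) ^ 2)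

lemma g_nonneg (u z : ℂ) : 0 ≤ g u z :=
  mul_nonneg (by have := Real.pi_pos; positivity) (Real.exp_nonneg _)

lemma gauss1d_integrable (a : ℝ) : Integrable (fun x : ℝ => Real.exp (-(x - a) ^ 2)) := by
  have h : Integrable (fun x : ℝ => Real.exp (-1 * x ^ 2)) := integrable_exp_neg_mul_sq one_pos
  have := h.comp_sub_right a
  simpa [neg_one_mul] using this

lemma gauss1d_integral (a : ℝ) : ∫ x : ℝ, Real.exp (-(x - a) ^ 2) = Real.sqrt π := by
  rw [integral_sub_right_eq_self (fun x => Real.exp (-x ^ 2)) a]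
  simpa [neg_one_mul] using integral_gaussian 1

lemma g_eq_prod (u : ℂ) (z : ℂ) :
    g u z = (1 / π) * (Real.exp (-(z.re - u.re) ^ 2) * Real.exp (-(z.im - u.im) ^ 2)) := by
  rw [g, ← Real.exp_add]
  congr 2
  rw [Complex.sq_norm, Complex.normSq_apply]
  simp only [Complex.sub_re, Complex.sub_im]
  ring

lemma g_comp (u : ℂ) (p : ℝ × ℝ) :
    g u (Complex.measurableEquivRealProd.symm p)
      = (1 / π) * (Real.exp (-(p.1 - u.re) ^ 2) * Real.exp (-(p.2 - u.im) ^ 2)) := by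
  rw [g_eq_prod]
  have h : Complex.measurableEquivRealProd.symm p = Complex.equivRealProd.symm p := rfl
  rw [h, Complex.equivRealProd_symm_apply]
  simp

lemma g_integrable (u : ℂ) : Integrable (g u) := by
  have hprod : Integrable (fun p : ℝ × ℝ =>
      Real.exp (-(p.1 - u.re) ^ 2) * Real.exp (-(p.2 - u.im) ^ 2)) (volume.prod volume) :=
    (gauss1d_integrable u.re).mul_prod (gauss1d_integrable u.im)
  have hprod2 : Integrable (fun p : ℝ × ℝ =>
      (1/π) * (Real.exp (-(p.1 - u.re) ^ 2) * Real.exp (-(p.2 - u.im) ^ 2)))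
      (volume.prod volume) := hprod.const_mul _
  have hmp := Complex.volume_preserving_equiv_real_prod.symm
  have hemb := Complex.measurableEquivRealProd.symm.measurableEmbedding
  rw [← hmp.integrable_comp_emb hemb]
  have h : (g u ∘ Complex.measurableEquivRealProd.symm) = fun p : ℝ × ℝ =>
      (1/π) * (Real.exp (-(p.1 - u.re) ^ 2) * Real.exp (-(p.2 - u.im) ^ 2)) := by
    ext p; exact g_comp u p
  rw [h]
  rwa [Measure.volume_eq_prod]

lemma g_integral (u : ℂ) : ∫ z : ℂ, g u z = 1 := by
  have hmp := Complex.volume_preserving_equiv_real_prod.symm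
  have hemb := Complex.measurableEquivRealProd.symm.measurableEmbedding
  rw [← hmp.integral_comp hemb (g u)]
  calc ∫ p : ℝ × ℝ, g u (Complex.measurableEquivRealProd.symm p)
      = ∫ p : ℝ × ℝ, (1/π) * (Real.exp (-(p.1 - u.re) ^ 2) * Real.exp (-(p.2 - u.im) ^ 2)) := by
        simp_rw [g_comp]
    _ = (1/π) * ∫ p : ℝ × ℝ, Real.exp (-(p.1 - u.re) ^ 2) * Real.exp (-(p.2 - u.im) ^ 2) :=
        integral_const_mul _ _
    _ = (1/π) * (Real.sqrt π * Real.sqrt π) := by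
        rw [Measure.volume_eq_prod,
          integral_prod_mul (fun x => Real.exp (-(x - u.re) ^ 2))
            (fun y => Real.exp (-(y - u.im) ^ 2)),
          gauss1d_integral, gauss1d_integral]
    _ = 1 := by
        rw [Real.mul_self_sqrt Real.pi_pos.le]
        field_simp

lemma g_continuous : Continuous (fun p : ℂ × ℂ => g p.1 p.2) := by
  unfold g
  exact continuous_const.mul (Real.continuous_exp.comp
    (((continuous_norm.comp (continuous_snd.sub continuous_fst)).pow 2).neg))

lemma measurable_arg2pi : Measurable arg2pi := by
  unfold arg2pi
  exact Measurable.ite (measurableSet_le measurable_const Complex.measurable_arg)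
    Complex.measurable_arg (Complex.measurable_arg.add_const _)

lemma measurableSet_sector (b y : ℕ) : MeasurableSet (sector b y) := by
  have h0 : MeasurableSet {z : ℂ | z ≠ 0} := (measurableSet_singleton (0:ℂ)).compl
  have h1 : MeasurableSet {z : ℂ | 2 * π * y / 2 ^ b ≤ arg2pi z} :=
    measurableSet_le measurable_const measurable_arg2pi
  have h2 : MeasurableSet {z : ℂ | arg2pi z < 2 * π * (y + 1) / 2 ^ b} :=
    measurableSet_lt measurable_arg2pi measurable_const
  exact h0.inter (h1.inter h2)

lemma sector_disjoint (b : ℕ) {y y' : ℕ} (h : y ≠ y') :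
    Disjoint (sector b y) (sector b y') := by
  rw [Set.disjoint_left]
  rintro z ⟨hz0, hzl, hzu⟩ ⟨hz0', hzl', hzu'⟩
  have hpi := Real.pi_pos
  have hpow : (0:ℝ) < 2 ^ b := by positivity
  rcases lt_or_gt_of_ne h with hlt | hlt
  · have hy : (y:ℝ) + 1 ≤ (y':ℝ) := by exact_mod_cast hlt
    have : 2 * π * (y + 1) / 2 ^ b ≤ 2 * π * y' / 2 ^ b :=
      (div_le_div_iff_of_pos_right hpow).2 (by nlinarith)
    linarith
  · have hy : (y':ℝ) + 1 ≤ (y:ℝ) := by exact_mod_cast hlt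
    have : 2 * π * (y' + 1) / 2 ^ b ≤ 2 * π * y / 2 ^ b :=
      (div_le_div_iff_of_pos_right hpow).2 (by nlinarith)
    linarith

lemma sector_iUnion (b : ℕ) : (⋃ y ∈ Finset.range (2 ^ b), sector b y) = {z : ℂ | z ≠ 0} := by
  ext z
  simp only [Set.mem_iUnion, Set.mem_setOf_eq]
  constructor
  · rintro ⟨y, _, hz, _⟩; exact hz
  · intro hz
    have hpi := Real.pi_pos
    have hpow : (0:ℝ) < 2 ^ b := by positivity
    set a := arg2pi z with ha
    have h0 : 0 ≤ a := arg2pi_nonneg z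
    have h2 : a < 2 * π := arg2pi_lt z
    set t : ℝ := a * 2 ^ b / (2 * π) with ht
    have ht0 : 0 ≤ t := by positivity
    have ht2 : t < 2 ^ b := by
      rw [ht, div_lt_iff₀ (by positivity)]
      calc a * 2 ^ b < 2 * π * 2 ^ b := by nlinarith
        _ = 2 ^ b * (2 * π) := by ring
    refine ⟨⌊t⌋₊, ?_, hz, ?_, ?_⟩
    · rw [Finset.mem_range]
      exact_mod_cast (Nat.floor_lt ht0).2 (by exact_mod_cast ht2)
    · rw [div_le_iff₀ hpow]
      have : (⌊t⌋₊ : ℝ) ≤ t := Nat.floor_le ht0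
      calc 2 * π * ⌊t⌋₊ ≤ 2 * π * t := by nlinarith
        _ = a * 2 ^ b := by rw [ht]; field_simp
    · rw [lt_div_iff₀ hpow]
      have : t < ⌊t⌋₊ + 1 := Nat.lt_floor_add_one t
      calc a * 2 ^ b = 2 * π * t := by rw [ht]; field_simp
        _ < 2 * π * (⌊t⌋₊ + 1) := by nlinarith

/-! ### Rotation of sectors -/

lemma angle_inj {x y : ℝ} (hx0 : 0 ≤ x) (hx2 : x < 2 * π) (hy0 : 0 ≤ y) (hy2 : y < 2 * π)
    (h : (x : Real.Angle) = (y : Real.Angle)) : x = y := by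
  obtain ⟨k, hk⟩ := Real.Angle.angle_eq_iff_two_pi_dvd_sub.1 h
  have hpi := Real.pi_pos
  have hk0 : k = 0 := by
    by_contra hk0
    have h1 : (1:ℝ) ≤ |(k:ℝ)| := by exact_mod_cast Int.one_le_abs (by exact_mod_cast hk0)
    have h2 : |x - y| < 2 * π := abs_sub_lt_of_nonneg_of_lt hx0 hx2 hy0 hy2
    rw [hk, abs_mul, abs_of_pos (by linarith : (0:ℝ) < 2 * π)] at h2
    nlinarith
  rw [hk0] at hk; push_cast at hk; linarith

lemma arg2pi_coe (z : ℂ) : (arg2pi z : Real.Angle) = (Complex.arg z : Real.Angle) := by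
  rw [arg2pi]; split_ifs with h
  · rfl
  · rw [Real.Angle.coe_add, Real.Angle.coe_two_pi, add_zero]

lemma arg2pi_rot {δ : ℝ} (hδ0 : 0 < δ) (hδπ : δ ≤ π) {z : ℂ} (hz : z ≠ 0) :
    arg2pi (Complex.exp ((δ : ℂ) * Complex.I) * z) =
      if arg2pi z < 2 * π - δ then arg2pi z + δ else arg2pi z + δ - 2 * π := by
  have hpi := Real.pi_pos
  set c : ℂ := Complex.exp ((δ : ℂ) * Complex.I) with hc
  have hc0 : c ≠ 0 := Complex.exp_ne_zero _
  have hargc : Complex.arg c = δ := by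
    rw [hc, Complex.arg_exp_mul_I]
    exact toIocMod_eq_self _ |>.2 ⟨by linarith, by linarith⟩
  set a := arg2pi z with ha
  have ha0 : 0 ≤ a := arg2pi_nonneg z
  have ha2 : a < 2 * π := arg2pi_lt z
  set t : ℝ := if a < 2 * π - δ then a + δ else a + δ - 2 * π with htdef
  have ht0 : 0 ≤ t := by
    rw [htdef]; split_ifs with h
    · linarith
    · push_neg at h; linarith
  have ht2 : t < 2 * π := by
    rw [htdef]; split_ifs with h
    · linarith
    · linarith
  have hex : ∃ k : ℤ, a - Complex.arg z = 2 * π * k := by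
    rw [ha, arg2pi]; split_ifs
    · exact ⟨0, by simp⟩
    · exact ⟨1, by push_cast; ring⟩
  obtain ⟨k, hk⟩ := hex
  have hcoe : ((arg2pi (c * z) : ℝ) : Real.Angle) = (t : Real.Angle) := by
    rw [arg2pi_coe, Complex.arg_mul_coe_angle hc0 hz, hargc, htdef]
    split_ifs with h
    · exact Real.Angle.angle_eq_iff_two_pi_dvd_sub.2 ⟨-k, by push_cast; linarith⟩
    · exact Real.Angle.angle_eq_iff_two_pi_dvd_sub.2 ⟨1 - k, by push_cast; linarith⟩
  exact angle_inj (arg2pi_nonneg _) (arg2pi_lt _) ht0 ht2 hcoe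

/-- previous sector index -/
def prev (b y : ℕ) : ℕ := if y = 0 then 2 ^ b - 1 else y - 1

lemma prev_lt (b : ℕ) {y : ℕ} (hy : y < 2 ^ b) : prev b y < 2 ^ b := by
  rw [prev]; split_ifs with h
  · exact Nat.sub_lt (Nat.two_pow_pos b) one_pos
  · omega

lemma sector_preimage (b : ℕ) (hb : 1 ≤ b) {y : ℕ} (hy : y < 2 ^ b) :
    rot b ⁻¹' sector b y = sector b (prev b y) := by
  have hpi := Real.pi_pos
  set δ : ℝ := 2 * π / 2 ^ b with hδdef
  have hN2 : (2:ℝ) ≤ (2:ℝ) ^ b := by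
    calc (2:ℝ) = 2 ^ 1 := (pow_one 2).symm
    _ ≤ 2 ^ b := pow_le_pow_right₀ one_le_two hb
  have hNpos : (0:ℝ) < 2 ^ b := by positivity
  have hδ0 : 0 < δ := by rw [hδdef]; positivity
  have hδN : δ * 2 ^ b = 2 * π := by rw [hδdef]; field_simp
  have hδπ : δ ≤ π := by
    rw [hδdef, div_le_iff₀ hNpos]; nlinarith
  have hB' : ∀ m : ℝ, 2 * π * m / 2 ^ b = δ * m := fun m => by rw [hδdef]; ring
  have hyr : (y:ℝ) + 1 ≤ 2 ^ b := by exact_mod_cast Nat.succ_le_of_lt hy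
  have hkey : δ * (y:ℝ) + δ ≤ 2 * π := by
    have h := mul_le_mul_of_nonneg_left hyr hδ0.le
    rw [hδN] at h; nlinarith
  ext z
  simp only [Set.mem_preimage, rot, sector, Set.mem_setOf_eq]
  by_cases hz : z = 0
  · subst hz
    simp [Complex.exp_ne_zero]
  · have hcz : Complex.exp (((δ:ℝ) : ℂ) * Complex.I) * z ≠ 0 :=
      mul_ne_zero (Complex.exp_ne_zero _) hz
    have harot := arg2pi_rot hδ0 hδπ hz
    set a := arg2pi z with ha
    have ha0 : 0 ≤ a := arg2pi_nonneg z
    have ha2 : a < 2 * π := arg2pi_lt z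
    rcases Nat.eq_zero_or_pos y with rfl | hy1
    · have hprev : prev b 0 = 2 ^ b - 1 := rfl
      have hcast : ((2 ^ b - 1 : ℕ) : ℝ) = 2 ^ b - 1 := by
        rw [Nat.cast_sub Nat.one_le_two_pow]; push_cast; ring
      rw [hprev, harot]
      simp only [hcast, Nat.cast_zero]
      rw [hB', hB', hB', hB']
      have e1 : δ * ((2:ℝ) ^ b - 1) = 2 * π - δ := by nlinarith
      have e2 : δ * ((2:ℝ) ^ b - 1 + 1) = 2 * π := by nlinarith
      rw [e1, e2]
      constructor
      · rintro ⟨-, h1, h2⟩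
        refine ⟨hz, ?_, ha2⟩
        split_ifs at h1 h2 with h
        · simp only [Nat.cast_zero, mul_zero, zero_add, mul_one] at h1 h2; linarith
        · push_neg at h; linarith
      · rintro ⟨-, h1, h2⟩
        refine ⟨hcz, ?_, ?_⟩
        · rw [if_neg (by linarith)]
          simp only [Nat.cast_zero, mul_zero]; linarith
        · rw [if_neg (by linarith)]
          simp only [Nat.cast_zero, zero_add, mul_one]; linarith
    · have hprev : prev b y = y - 1 := by rw [prev, if_neg (Nat.pos_iff_ne_zero.1 hy1)]
      have hcast : ((y - 1 : ℕ) : ℝ) = (y:ℝ) - 1 := by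
        rw [Nat.cast_sub hy1]; push_cast; ring
      have hy1r : (1:ℝ) ≤ (y:ℝ) := by exact_mod_cast hy1
      rw [hprev, harot]
      simp only [hcast]
      rw [hB', hB', hB', hB']
      have e1 : δ * ((y:ℝ) - 1 + 1) = δ * y := by ring
      have e2 : δ * ((y:ℝ) - 1) = δ * y - δ := by ring
      have e3 : δ * ((y:ℝ) + 1) = δ * y + δ := by ring
      rw [e1, e2, e3]
      have hδy : δ ≤ δ * (y:ℝ) := by nlinarith
      constructor
      · rintro ⟨-, h1, h2⟩
        refine ⟨hz, ?_, ?_⟩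
        · split_ifs at h1 h2 with h
          · linarith
          · push_neg at h; linarith
        · split_ifs at h1 h2 with h
          · linarith
          · push_neg at h; linarith
      · rintro ⟨-, h1, h2⟩
        refine ⟨hcz, ?_, ?_⟩
        · rw [if_pos (by linarith)]; linarith
        · rw [if_pos (by linarith)]; linarith

/-! ### `Wu` lemmas -/

lemma Wu_eq (b y : ℕ) (u : ℂ) : Wu b y u = ∫ z in sector b y, g u z := by
  rw [Wu, W]
  have h1 : Real.sqrt (‖u‖ ^ 2) = ‖u‖ :=
    Real.sqrt_sq (norm_nonneg u)
  have h2 : Complex.exp ((arg2pi u : ℂ) * Complex.I) =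
      Complex.exp ((Complex.arg u : ℂ) * Complex.I) := by
    rw [arg2pi]; split_ifs with h
    · rfl
    · push_cast
      rw [add_mul, Complex.exp_add, Complex.exp_two_pi_mul_I, mul_one]
  simp_rw [h1, h2, Complex.norm_mul_exp_arg_mul_I]
  rfl

lemma Wu_nonneg (b y : ℕ) (u : ℂ) : 0 ≤ Wu b y u := by
  rw [Wu_eq]
  exact setIntegral_nonneg (measurableSet_sector b y) fun z _ => g_nonneg u z

lemma Wu_le_one (b y : ℕ) (u : ℂ) : Wu b y u ≤ 1 := by
  rw [Wu_eq, ← g_integral u]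
  exact setIntegral_le_integral (g_integrable u) (ae_of_all _ fun z => g_nonneg u z)

lemma sum_Wu (b : ℕ) (u : ℂ) : ∑ y ∈ Finset.range (2 ^ b), Wu b y u = 1 := by
  simp_rw [Wu_eq]
  rw [← integral_biUnion_finset (Finset.range (2 ^ b))
      (fun y _ => measurableSet_sector b y)
      (fun y hy y' hy' hne => sector_disjoint b hne)
      (fun y _ => (g_integrable u).integrableOn)]
  rw [sector_iUnion b]
  have hcompl : {z : ℂ | z ≠ 0} =ᵐ[volume] (Set.univ : Set ℂ) := by
    rw [MeasureTheory.ae_eq_univ]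
    have : ({z : ℂ | z ≠ 0} : Set ℂ)ᶜ = {(0:ℂ)} := by
      ext w; simp [Set.mem_compl_iff]
    rw [this]
    exact measure_singleton 0
  rw [setIntegral_congr_set hcompl, setIntegral_univ]
  exact g_integral u

lemma stronglyMeasurable_Wu (b y : ℕ) : StronglyMeasurable (Wu b y) := by
  have hset : MeasurableSet ((Set.univ : Set ℂ) ×ˢ sector b y) :=
    MeasurableSet.univ.prod (measurableSet_sector b y)
  have hf : StronglyMeasurable fun p : ℂ × ℂ =>
      ((Set.univ : Set ℂ) ×ˢ sector b y).indicator (fun p : ℂ × ℂ => g p.1 p.2) p :=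
    (g_continuous.stronglyMeasurable).indicator hset
  have key := hf.integral_prod_right' (ν := (volume : Measure ℂ))
  have heq : (fun u => ∫ z, ((Set.univ : Set ℂ) ×ˢ sector b y).indicator
      (fun p : ℂ × ℂ => g p.1 p.2) (u, z)) = Wu b y := by
    classical
    ext u
    rw [Wu_eq, ← integral_indicator (measurableSet_sector b y)]
    congr 1
    ext z
    rw [Set.indicator_apply, Set.indicator_apply]
    congr 1
    simp [Set.mem_prod]
  rwa [heq] at key

lemma rot_measurePreserving (b : ℕ) : MeasurePreserving (rot b) volume volume := by
  have h : rot b = (rotation (Circle.exp (2 * π / 2 ^ b)) : ℂ ≃ₗᵢ[ℝ] ℂ) := by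
    ext z
    rw [rot, rotation_apply, Circle.coe_exp]
  rw [h]
  exact (rotation (Circle.exp (2 * π / 2 ^ b))).measurePreserving

lemma rot_measurableEmbedding (b : ℕ) : MeasurableEmbedding (rot b) := by
  have h : rot b = (rotation (Circle.exp (2 * π / 2 ^ b)) : ℂ ≃ₗᵢ[ℝ] ℂ) := by
    ext z
    rw [rot, rotation_apply, Circle.coe_exp]
  rw [h]
  exact (rotation (Circle.exp (2 * π / 2 ^ b))).toHomeomorph.toMeasurableEquiv.measurableEmbedding

lemma Wu_rot (b : ℕ) (hb : 1 ≤ b) {y : ℕ} (hy : y < 2 ^ b) (u : ℂ) :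
    Wu b y (rot b u) = Wu b (prev b y) u := by
  rw [Wu_eq, Wu_eq]
  rw [← (rot_measurePreserving b).setIntegral_preimage_emb (rot_measurableEmbedding b)]
  rw [sector_preimage b hb hy]
  apply setIntegral_congr_fun (measurableSet_sector b (prev b y))
  intro w _
  show g (rot b u) (rot b w) = g u w
  rw [g, g]
  congr 2
  rw [rot, rot, ← mul_sub, norm_mul]
  have : ‖Complex.exp (((2 * π / 2 ^ b : ℝ) : ℂ) * Complex.I)‖ = 1 := by
    rw [Complex.norm_exp, Complex.mul_I_re, Complex.ofReal_im, neg_zero, Real.exp_zero]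
  rw [this, one_mul]

/-! ### The main theorem -/

/-- under a `2π/2^b`-symmetric input distribution the output of the quantizer
is uniform, so the output entropy equals `b`. -/
theorem stmt_4 (b : ℕ) (hb : 1 ≤ b) (μ : Measure ℂ) [IsProbabilityMeasure μ]
    (hμ : RotSymm b μ) :
    (∀ y ∈ Finset.range (2 ^ b), outP b μ y = (2 ^ b : ℝ)⁻¹) ∧
      (∑ y ∈ Finset.range (2 ^ b), nH (outP b μ y)) = b := by
  have hNpos : 0 < 2 ^ b := Nat.two_pow_pos b
  -- step: invariance of outP under prev
  have hstep : ∀ y : ℕ, y < 2 ^ b → outP b μ y = outP b μ (prev b y) := by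
    intro y hy
    have hmeas : AEMeasurable (rot b) μ := (rot_measurePreserving b).measurable.aemeasurable
    calc outP b μ y = ∫ u, Wu b y u ∂μ := rfl
      _ = ∫ u, Wu b y u ∂(Measure.map (rot b) μ) := by rw [hμ]
      _ = ∫ u, Wu b y (rot b u) ∂μ :=
          integral_map hmeas (stronglyMeasurable_Wu b y).aestronglyMeasurable
      _ = ∫ u, Wu b (prev b y) u ∂μ := by
          congr 1; ext u; exact Wu_rot b hb hy u
      _ = outP b μ (prev b y) := rfl
  -- all outP equal outP 0
  have hconst : ∀ y : ℕ, y < 2 ^ b → outP b μ y = outP b μ 0 := by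
    intro y
    induction y with
    | zero => intro _; rfl
    | succ n ih =>
      intro h
      have h1 := hstep (n + 1) h
      rw [prev, if_neg (Nat.succ_ne_zero n)] at h1
      simp only [Nat.add_sub_cancel] at h1
      rw [h1]
      exact ih (Nat.lt_of_succ_lt h)
  -- integrability of Wu
  have hint : ∀ y : ℕ, Integrable (Wu b y) μ := by
    intro y
    refine Integrable.mono' (integrable_const 1)
      (stronglyMeasurable_Wu b y).aestronglyMeasurable (ae_of_all _ fun u => ?_)
    rw [Real.norm_eq_abs, abs_of_nonneg (Wu_nonneg b y u)]
    exact Wu_le_one b y u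
  -- sum of outP is 1
  have hsum : ∑ y ∈ Finset.range (2 ^ b), outP b μ y = 1 := by
    have h1 : ∑ y ∈ Finset.range (2 ^ b), outP b μ y
        = ∫ u, ∑ y ∈ Finset.range (2 ^ b), Wu b y u ∂μ := by
      rw [integral_finset_sum _ (fun y _ => hint y)]
      rfl
    rw [h1]
    have h2 : ∀ u : ℂ, ∑ y ∈ Finset.range (2 ^ b), Wu b y u = 1 := sum_Wu b
    simp_rw [h2]
    simp
  -- outP 0 = 1/2^b
  have h0 : outP b μ 0 = (2 ^ b : ℝ)⁻¹ := by
    have h1 : ∑ y ∈ Finset.range (2 ^ b), outP b μ y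
        = (2 ^ b : ℝ) * outP b μ 0 := by
      rw [Finset.sum_congr rfl fun y hy => hconst y (Finset.mem_range.1 hy)]
      rw [Finset.sum_const, Finset.card_range, nsmul_eq_mul]
      push_cast
      ring
    rw [h1] at hsum
    have hN : (2:ℝ) ^ b ≠ 0 := by positivity
    field_simp at hsum ⊢
    linarith
  have huniform : ∀ y ∈ Finset.range (2 ^ b), outP b μ y = (2 ^ b : ℝ)⁻¹ := by
    intro y hy
    rw [hconst y (Finset.mem_range.1 hy), h0]
  refine ⟨huniform, ?_⟩
  rw [Finset.sum_congr rfl fun y hy => by rw [huniform y hy]]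
  rw [Finset.sum_const, Finset.card_range, nsmul_eq_mul]
  rw [nH, Real.logb_inv]
  have hlog : Real.logb 2 ((2:ℝ) ^ b) = b := by
    rw [Real.logb_pow, Real.logb_self_eq_one (by norm_num : (1:ℝ) < 2)]
    ring
  rw [hlog]
  push_cast
  have hN : (2:ℝ) ^ b ≠ 0 := by positivity
  field_simp

end
end
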